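/- arXiv:2109.03992 — 2 statements merged into one kernel-verified Lean document; each statement's English description precedes it below -/
import Mathlib

section
/- Let d be a positive integer, let ρ be a probability measure on ℝ × ℝ^d, and let f : [0,1]^d → ℝ satisfy f(x) = ∫ c·σ̇(wᵀx) dρ(c,w) for all x ∈ [0,1]^d, with the integrand integrable. Suppose V := ∫ |c|·‖w‖₁³ dρ(c,w) is finite and strictly positive. Then there exists a probability measure ρ′ on ℝ × ℝ^d, supported on the set {−V, V} × {w ∈ ℝ^d : ‖w‖₁ = 1}, such that f(x) = ∫ c·σ̇(wᵀx) dρ′(c,w) for all x ∈ [0,1]^d and ∫ |c|·‖w‖₁³ dρ′(c,w) = V. -/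
open MeasureTheory
open scoped ENNReal NNReal

noncomputable section

/-- The ReLU³ activation function `σ̇(t) = max(0, t³/6)`. -/
def relu3 (t : ℝ) : ℝ := max 0 (t ^ 3 / 6)

/-- The unit cube `[0,1]^d` in `ℝ^d`. -/
def cube (d : ℕ) : Set (Fin d → ℝ) := Set.Icc 0 1

lemma relu3_cont : Continuous relu3 := by
  unfold relu3; fun_prop

lemma relu3_div (t S : ℝ) (hS : 0 < S) : relu3 (t / S) = relu3 t / S ^ 3 := by
  unfold relu3
  rw [div_pow, div_div, mul_comm (S ^ 3) 6, ← div_div,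
    ← max_div_div_right (by positivity : (0:ℝ) ≤ S ^ 3) 0 (t ^ 3 / 6), zero_div]

/-- normalization of a ReLU³ Barron representing measure: any ReLU³
Barron representation of `f` with Barron integral `V > 0` can be replaced by one supported
on `{−V, V} × {‖w‖₁ = 1}` having the same Barron integral. -/
theorem barron_rep_normalization
    (d : ℕ) (hd : 0 < d)
    (ρ : Measure (ℝ × (Fin d → ℝ))) (hρ : IsProbabilityMeasure ρ)
    (f : (Fin d → ℝ) → ℝ)
    (hint : ∀ x ∈ cube d,
      Integrable (fun p : ℝ × (Fin d → ℝ) => p.1 * relu3 (∑ i, p.2 i * x i)) ρ)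
    (hrep : ∀ x ∈ cube d, f x = ∫ p, p.1 * relu3 (∑ i, p.2 i * x i) ∂ρ)
    (V : ℝ) (hVdef : V = ∫ p, |p.1| * (∑ i, |p.2 i|) ^ 3 ∂ρ)
    (hVint : Integrable (fun p : ℝ × (Fin d → ℝ) => |p.1| * (∑ i, |p.2 i|) ^ 3) ρ)
    (hVpos : 0 < V) :
    ∃ ρ' : Measure (ℝ × (Fin d → ℝ)), IsProbabilityMeasure ρ' ∧
      (∀ᵐ p ∂ρ', (p.1 = V ∨ p.1 = -V) ∧ (∑ i, |p.2 i|) = 1) ∧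
      (∀ x ∈ cube d, f x = ∫ p, p.1 * relu3 (∑ i, p.2 i * x i) ∂ρ') ∧
      (∫ p, |p.1| * (∑ i, |p.2 i|) ^ 3 ∂ρ') = V := by
  classical
  -- the ℓ¹ norm of the weight part
  set S : (ℝ × (Fin d → ℝ)) → ℝ := fun p => ∑ i, |p.2 i| with hSdef
  have hSnn : ∀ p, 0 ≤ S p := fun p => Finset.sum_nonneg fun i _ => abs_nonneg _
  -- the density
  set g : (ℝ × (Fin d → ℝ)) → ℝ := fun p => |p.1| * S p ^ 3 / V with hgdef
  have hgnn : ∀ p, 0 ≤ g p := fun p => by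
    have := hSnn p; positivity
  have hgcont : Continuous g := by
    apply Continuous.div_const
    fun_prop
  have hgmeas : Measurable g := hgcont.measurable
  -- the normalization map
  set T : (ℝ × (Fin d → ℝ)) → (ℝ × (Fin d → ℝ)) :=
    fun p => (if p.1 < 0 then -V else V, fun i => p.2 i / S p) with hTdef
  have hTmeas : Measurable T := by
    apply Measurable.prod
    · exact Measurable.ite (measurableSet_lt (by fun_prop) measurable_const)
        measurable_const measurable_const
    · apply measurable_pi_lambda
      intro i
      exact ((measurable_snd.eval (a := i)).comp measurable_id).div
        (by fun_prop : Measurable S)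
  set ρ₀ : Measure (ℝ × (Fin d → ℝ)) :=
    ρ.withDensity (fun p => ((g p).toNNReal : ℝ≥0∞)) with hρ₀def
  have hgint : Integrable g ρ := hVint.div_const V
  have hgint1 : ∫ p, g p ∂ρ = 1 := by
    rw [hgdef]
    simp only [integral_div]
    rw [← hVdef, div_self hVpos.ne']
  have hρ₀prob : IsProbabilityMeasure ρ₀ := by
    constructor
    rw [hρ₀def, withDensity_apply _ MeasurableSet.univ, setLIntegral_univ]
    have h1 := ofReal_integral_eq_lintegral_ofReal hgint
      (Filter.Eventually.of_forall hgnn)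
    have h2 : ∀ p, ENNReal.ofReal (g p) = ((g p).toNNReal : ℝ≥0∞) := fun p => rfl
    simp only [h2] at h1
    rw [← h1, hgint1, ENNReal.ofReal_one]
  -- key pointwise identity for the representation
  have key1 : ∀ (x : Fin d → ℝ) (p : ℝ × (Fin d → ℝ)),
      g p * ((T p).1 * relu3 (∑ i, (T p).2 i * x i))
        = p.1 * relu3 (∑ i, p.2 i * x i) := by
    intro x p
    rcases eq_or_lt_of_le (hSnn p) with h0 | hpos
    · -- S p = 0, hence p.2 = 0
      have hw : ∀ i, p.2 i = 0 := by
        intro i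
        have := (Finset.sum_eq_zero_iff_of_nonneg
          (fun i _ => abs_nonneg (p.2 i))).1 h0.symm i (Finset.mem_univ i)
        exact abs_eq_zero.1 this
      have hz : (∑ i, p.2 i * x i) = 0 := by
        apply Finset.sum_eq_zero; intro i _; rw [hw i, zero_mul]
      have hg0 : g p = 0 := by
        rw [hgdef]; simp [← h0]
      rw [hg0, hz, zero_mul]
      show (0:ℝ) = p.1 * relu3 0
      simp [relu3]
    · -- S p > 0
      have hsum : (∑ i, (T p).2 i * x i) = (∑ i, p.2 i * x i) / S p := by
        rw [hTdef]
        simp only [Finset.sum_div]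
        congr 1; funext i; rw [div_mul_eq_mul_div]
      rw [hsum, relu3_div _ _ hpos, hTdef, hgdef]
      by_cases hc : p.1 < 0
      · simp only [if_pos hc]
        have habs : |p.1| = -p.1 := abs_of_neg hc
        field_simp [habs]
        rw [habs]; ring
      · simp only [if_neg hc]
        have habs : |p.1| = p.1 := abs_of_nonneg (not_lt.1 hc)
        field_simp [habs]
        rw [habs]; ring
  -- key pointwise identity for the Barron integral
  have key2 : ∀ p : ℝ × (Fin d → ℝ),
      g p * (|(T p).1| * (∑ i, |(T p).2 i|) ^ 3) = |p.1| * S p ^ 3 := by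
    intro p
    rcases eq_or_lt_of_le (hSnn p) with h0 | hpos
    · have hg0 : g p = 0 := by rw [hgdef]; simp [← h0]
      rw [hg0, zero_mul, ← h0]
      simp
    · have habsT : |(T p).1| = V := by
        rw [hTdef]
        by_cases hc : p.1 < 0
        · simp [if_pos hc, abs_of_pos hVpos]
        · simp [if_neg hc, abs_of_pos hVpos]
      have hsum : (∑ i, |(T p).2 i|) = 1 := by
        rw [hTdef]
        simp only
        have : ∀ i, |p.2 i / S p| = |p.2 i| / S p := by
          intro i; rw [abs_div, abs_of_pos hpos]
        simp only [this, ← Finset.sum_div]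
        exact div_self hpos.ne'
      rw [habsT, hsum, hgdef]
      field_simp
  refine ⟨Measure.map T ρ₀, Measure.isProbabilityMeasure_map hTmeas.aemeasurable, ?_, ?_, ?_⟩
  · -- support condition
    have hA : MeasurableSet {p : ℝ × (Fin d → ℝ) |
        (p.1 = V ∨ p.1 = -V) ∧ (∑ i, |p.2 i|) = 1} := by
      apply MeasurableSet.inter
      · exact MeasurableSet.union (measurable_fst (measurableSet_singleton V))
          (measurable_fst (measurableSet_singleton (-V)))
      · exact (by fun_prop : Measurable S) (measurableSet_singleton 1)
    rw [ae_map_iff hTmeas.aemeasurable hA, hρ₀def,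
      ae_withDensity_iff (by fun_prop)]
    filter_upwards with p hp
    have hgpos : 0 < g p := by
      rcases lt_or_eq_of_le (hgnn p) with h | h
      · exact h
      · exact absurd (by simp [← h]) hp
    have hSpos : 0 < S p := by
      by_contra h
      push_neg at h
      have : S p = 0 := le_antisymm h (hSnn p)
      rw [hgdef] at hgpos
      simp only [this] at hgpos
      norm_num at hgpos
    constructor
    · by_cases hc : p.1 < 0
      · right; simp [hTdef, if_pos hc]
      · left; simp [hTdef, if_neg hc]
    · have : ∀ i, |p.2 i / S p| = |p.2 i| / S p := by
        intro i; rw [abs_div, abs_of_pos hSpos]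
      rw [hTdef]; simp only
      simp only [this, ← Finset.sum_div]
      exact div_self hSpos.ne'
  · -- representation
    intro x hx
    have hcont : Continuous fun p : ℝ × (Fin d → ℝ) =>
        p.1 * relu3 (∑ i, p.2 i * x i) := by
      apply Continuous.mul continuous_fst
      exact relu3_cont.comp (by fun_prop)
    rw [integral_map hTmeas.aemeasurable hcont.aestronglyMeasurable, hρ₀def,
      integral_withDensity_eq_integral_smul (by fun_prop : Measurable fun p => (g p).toNNReal)]
    have : ∀ p : ℝ × (Fin d → ℝ),
        (g p).toNNReal • ((T p).1 * relu3 (∑ i, (T p).2 i * x i))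
          = p.1 * relu3 (∑ i, p.2 i * x i) := by
      intro p
      rw [NNReal.smul_def, smul_eq_mul, Real.coe_toNNReal _ (hgnn p)]
      exact key1 x p
    simp only [this]
    exact hrep x hx
  · -- Barron integral
    have hcont : Continuous fun p : ℝ × (Fin d → ℝ) =>
        |p.1| * (∑ i, |p.2 i|) ^ 3 := by fun_prop
    rw [integral_map hTmeas.aemeasurable hcont.aestronglyMeasurable, hρ₀def,
      integral_withDensity_eq_integral_smul (by fun_prop : Measurable fun p => (g p).toNNReal)]
    have : ∀ p : ℝ × (Fin d → ℝ),
        (g p).toNNReal • (|(T p).1| * (∑ i, |(T p).2 i|) ^ 3)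
          = |p.1| * (∑ i, |p.2 i|) ^ 3 := by
      intro p
      rw [NNReal.smul_def, smul_eq_mul, Real.coe_toNNReal _ (hgnn p)]
      exact key2 p
    simp only [this]
    exact hVdef.symm

end
end

section
/- Let E be a measurable space, κ a Markov kernel on E, and π̂ a probability measure on E that is invariant for κ. Let π be a finite measure on E, let V : E → ℝ be measurable with V ≥ 1 and ∫ V dπ̂ < ∞, and let f : E → ℝ be measurable with |f(x)| ≤ V(x) for all x; assume f is integrable with respect to π, with respect to π̂, and with respect to κⁿ(x) for every n ∈ ℕ and x ∈ E. Suppose there are constants K > 0, ρ ∈ (0,1) and ε ≥ 0 such that for every n ∈ ℕ and every x ∈ E, | ∫ f dπ − ∫ f d(κⁿ(x)) | ≤ K·( ρⁿ + ε·(1 − ρⁿ)/(1 − ρ) )·V(x). Then | ∫ f dπ − ∫ f dπ̂ | ≤ (K·ε/(1 − ρ))·∫ V dπ̂. -/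
open MeasureTheory ProbabilityTheory

noncomputable section

/-- The `n`-fold composition of a Markov kernel: `kpow κ 0 = id` (Dirac kernel) and
`kpow κ (n+1) = κ ∘ₖ kpow κ n`, so that
`kpow κ (n+1) x A = ∫ κ y A d(kpow κ n x)(y)`. -/
def kpow {E : Type*} [MeasurableSpace E] (κ : Kernel E E) : ℕ → Kernel E E
  | 0 => Kernel.id
  | n + 1 => κ.comp (kpow κ n)

open Filter

/-- Bochner integral over a bind of a measure with a kernel. -/
lemma my_integral_bind {α β : Type*} [MeasurableSpace α] [MeasurableSpace β]
    (μ : Measure α) (η : Kernel α β) [IsSFiniteKernel η] {f : β → ℝ}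
    (hfm : Measurable f) (hfi : Integrable f (μ.bind η)) (hfx : ∀ x, Integrable f (η x)) :
    ∫ y, f y ∂(μ.bind η) = ∫ x, ∫ y, f y ∂(η x) ∂μ := by
  set A : α → ENNReal := fun x => ∫⁻ y, ENNReal.ofReal (f y) ∂(η x) with hA
  set B : α → ENNReal := fun x => ∫⁻ y, ENNReal.ofReal (-f y) ∂(η x) with hB
  have hAm : Measurable A := Measurable.lintegral_kernel (hfm.ennreal_ofReal)
  have hBm : Measurable B := Measurable.lintegral_kernel (hfm.neg.ennreal_ofReal)
  have hle : ∀ y, ENNReal.ofReal (f y) ≤ ‖f y‖₊ := fun y => by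
    rw [show ((‖f y‖₊ : ENNReal)) = ‖f y‖ₑ from rfl, Real.enorm_eq_ofReal_abs]; exact ENNReal.ofReal_le_ofReal (le_abs_self _)
  have hle' : ∀ y, ENNReal.ofReal (-f y) ≤ ‖f y‖₊ := fun y => by
    rw [show ((‖f y‖₊ : ENNReal)) = ‖f y‖ₑ from rfl, Real.enorm_eq_ofReal_abs]; exact ENNReal.ofReal_le_ofReal (neg_le_abs _)
  have hAlt : ∀ x, A x < ⊤ := fun x =>
    lt_of_le_of_lt (lintegral_mono fun y => hle y) (hfx x).2
  have hBlt : ∀ x, B x < ⊤ := fun x =>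
    lt_of_le_of_lt (lintegral_mono fun y => hle' y) (hfx x).2
  have hbindA : ∫⁻ y, ENNReal.ofReal (f y) ∂(μ.bind η) = ∫⁻ x, A x ∂μ :=
    Measure.lintegral_bind η.measurable.aemeasurable hfm.ennreal_ofReal.aemeasurable
  have hbindB : ∫⁻ y, ENNReal.ofReal (-f y) ∂(μ.bind η) = ∫⁻ x, B x ∂μ :=
    Measure.lintegral_bind η.measurable.aemeasurable hfm.neg.ennreal_ofReal.aemeasurable
  have hAfin : ∫⁻ x, A x ∂μ ≠ ⊤ := by
    rw [← hbindA]
    exact ((lt_of_le_of_lt (lintegral_mono fun y => hle y) hfi.2)).ne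
  have hBfin : ∫⁻ x, B x ∂μ ≠ ⊤ := by
    rw [← hbindB]
    exact ((lt_of_le_of_lt (lintegral_mono fun y => hle' y) hfi.2)).ne
  rw [integral_eq_lintegral_pos_part_sub_lintegral_neg_part hfi, hbindA, hbindB]
  rw [← integral_toReal hAm.aemeasurable (Eventually.of_forall hAlt),
    ← integral_toReal hBm.aemeasurable (Eventually.of_forall hBlt),
    ← integral_sub (integrable_toReal_of_lintegral_ne_top hAm.aemeasurable hAfin)
      (integrable_toReal_of_lintegral_ne_top hBm.aemeasurable hBfin)]
  exact integral_congr_ae (Eventually.of_forall fun x =>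
    (integral_eq_lintegral_pos_part_sub_lintegral_neg_part (hfx x)).symm)

/-- perturbation bound for invariant measures of Markov chains: if
`|π(f) − κⁿ(x)(f)| ≤ K(ρⁿ + ε(1−ρⁿ)/(1−ρ))V(x)` for all `n` and `x`, and `π̂` is invariant
for `κ`, then `|π(f) − π̂(f)| ≤ (Kε/(1−ρ)) π̂(V)`. -/
theorem invariant_measure_perturbation
    {E : Type*} [MeasurableSpace E]
    (κ : Kernel E E) [IsMarkovKernel κ]
    (πhat : Measure E) [IsProbabilityMeasure πhat]
    (hinv : ∀ A : Set E, MeasurableSet A → ∫⁻ x, κ x A ∂πhat = πhat A)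
    (π : Measure E) [IsFiniteMeasure π]
    (V : E → ℝ) (hVm : Measurable V) (hV1 : ∀ x, 1 ≤ V x)
    (hVint : Integrable V πhat)
    (f : E → ℝ) (hfm : Measurable f) (hfV : ∀ x, |f x| ≤ V x)
    (hfπ : Integrable f π) (hfπhat : Integrable f πhat)
    (hfκ : ∀ (n : ℕ) (x : E), Integrable f ((kpow κ n) x))
    (K ρ ε : ℝ) (hK : 0 < K) (hρ : ρ ∈ Set.Ioo (0 : ℝ) 1) (hε : 0 ≤ ε)
    (hbound : ∀ (n : ℕ) (x : E),
      |(∫ y, f y ∂π) - ∫ y, f y ∂((kpow κ n) x)|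
        ≤ K * (ρ ^ n + ε * (1 - ρ ^ n) / (1 - ρ)) * V x) :
    |(∫ y, f y ∂π) - ∫ y, f y ∂πhat| ≤ K * ε / (1 - ρ) * ∫ x, V x ∂πhat := by
  obtain ⟨hρ0, hρ1⟩ := hρ
  have h1ρ : (0:ℝ) < 1 - ρ := by linarith
  haveI hMarkov : ∀ n, IsMarkovKernel (kpow κ n) := by
    intro n
    induction n with
    | zero => rw [kpow]; infer_instance
    | succ n ih => rw [kpow]; exact Kernel.IsMarkovKernel.comp κ (kpow κ n)
  -- invariance of πhat under κ as bind
  have hbind1 : πhat.bind κ = πhat := by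
    ext A hA
    rw [Measure.bind_apply hA (Kernel.measurable κ).aemeasurable]
    exact hinv A hA
  have hbindn : ∀ n, πhat.bind (kpow κ n) = πhat := by
    intro n
    induction n with
    | zero =>
      have : (⇑(kpow κ 0) : E → Measure E) = Measure.dirac := by
        funext x; rw [kpow]; exact Kernel.id_apply x
      rw [this, Measure.bind_dirac]
    | succ n ih =>
      have hco : (⇑(kpow κ (n+1)) : E → Measure E) = fun x => (kpow κ n x).bind κ := by
        funext x
        show (κ.comp (kpow κ n)) x = _
        exact Kernel.comp_apply κ (kpow κ n) x
      rw [hco, ← Measure.bind_bind (kpow κ n).measurable.aemeasurable (Kernel.measurable κ).aemeasurable, ih, hbind1]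
  set c := ∫ y, f y ∂π with hc
  set I := ∫ x, V x ∂πhat with hI
  set F : ℕ → E → ℝ := fun n x => ∫ y, f y ∂(kpow κ n x) with hF
  set C : ℕ → ℝ := fun n => K * (ρ ^ n + ε * (1 - ρ ^ n) / (1 - ρ)) with hC
  have hCnn : ∀ n, 0 ≤ C n := by
    intro n
    have h1 : (0:ℝ) ≤ ρ ^ n := le_of_lt (pow_pos hρ0 n)
    have h2 : ρ ^ n ≤ 1 := pow_le_one₀ hρ0.le hρ1.le
    have : 0 ≤ ε * (1 - ρ ^ n) / (1 - ρ) :=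
      div_nonneg (mul_nonneg hε (by linarith)) h1ρ.le
    positivity
  -- step A : ∫ f dπhat = ∫ F n dπhat
  have hstepA : ∀ n, ∫ y, f y ∂πhat = ∫ x, F n x ∂πhat := by
    intro n
    conv_lhs => rw [← hbindn n]
    exact my_integral_bind πhat (kpow κ n) hfm (by rw [hbindn n]; exact hfπhat) (hfκ n)
  -- integrability of F n
  have hFm : ∀ n, StronglyMeasurable (F n) := by
    intro n
    have hsm : StronglyMeasurable fun p : E × E => f p.2 :=
      (hfm.comp measurable_snd).stronglyMeasurable
    exact hsm.integral_kernel_prod_right' (κ := kpow κ n)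
  have hFint : ∀ n, Integrable (F n) πhat := by
    intro n
    refine Integrable.mono ((integrable_const |c|).add (hVint.const_mul (C n)))
      (hFm n).aestronglyMeasurable (Eventually.of_forall fun x => ?_)
    have hb : |c - F n x| ≤ C n * V x := hbound n x
    have h1 : |F n x| ≤ |c| + C n * V x := by
      have h2 : |F n x| - |c| ≤ |c - F n x| := by
        rw [abs_sub_comm]; exact abs_sub_abs_le_abs_sub _ _
      linarith
    calc ‖F n x‖ = |F n x| := rfl
      _ ≤ |c| + C n * V x := h1
      _ ≤ ‖|c| + C n * V x‖ := le_abs_self _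
  -- step C : bound for each n
  have hstepC : ∀ n, |c - ∫ y, f y ∂πhat| ≤ C n * I := by
    intro n
    have heq : c - ∫ y, f y ∂πhat = ∫ x, (c - F n x) ∂πhat := by
      rw [integral_sub (integrable_const c) (hFint n), integral_const]
      simp [hstepA n]
    rw [heq]
    calc |∫ x, (c - F n x) ∂πhat| ≤ ∫ x, |c - F n x| ∂πhat := by
          simpa [Real.norm_eq_abs] using
            norm_integral_le_integral_norm (μ := πhat) (f := fun x => c - F n x)
      _ ≤ ∫ x, C n * V x ∂πhat := by
          refine integral_mono ((integrable_const c).sub (hFint n)).abs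
            (hVint.const_mul (C n)) fun x => ?_
          exact hbound n x
      _ = C n * I := by rw [integral_const_mul]
  -- step D : limit
  have hρpow : Tendsto (fun n : ℕ => ρ ^ n) atTop (nhds 0) :=
    tendsto_pow_atTop_nhds_zero_of_lt_one hρ0.le hρ1
  have htend : Tendsto (fun n => C n * I) atTop (nhds (K * ε / (1 - ρ) * I)) := by
    have h1 : Tendsto (fun n : ℕ => ε * (1 - ρ ^ n) / (1 - ρ)) atTop
        (nhds (ε * (1 - 0) / (1 - ρ))) :=
      ((tendsto_const_nhds.sub hρpow).const_mul ε).div_const (1 - ρ)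
    have h2 : Tendsto C atTop (nhds (K * (0 + ε * (1 - 0) / (1 - ρ)))) :=
      (hρpow.add h1).const_mul K
    have h3 : K * (0 + ε * (1 - 0) / (1 - ρ)) = K * ε / (1 - ρ) := by ring
    rw [h3] at h2
    exact h2.mul_const I
  exact ge_of_tendsto' htend hstepC

end
end
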